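/- The canonical Liouville form is the unique Sp(V,Ω)-invariant Liouville form on V. Concretely: if V ≠ {0} and ψ: V → ℝ is a smooth function such that for every g ∈ Sp(V, Ω) the function ψ ∘ g − ψ is constant on V, then ψ itself is constant (so dψ = 0 and θ⁰ + dψ = θ⁰). -/
import Mathlib


/-- The canonical Liouville form is the unique `Sp(V,Ω)`-invariant Liouville form:
if `V ≠ {0}` and `ψ : V → ℝ` is a smooth function such that for every `g ∈ Sp(V, Ω)` the
function `ψ ∘ g − ψ` is constant on `V`, then `ψ` itself is constant. -/
theorem stmt_3 {V : Type*} [NormedAddCommGroup V] [NormedSpace ℝ V] [FiniteDimensional ℝ V]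
    [Nontrivial V]
    (Ω : V →ₗ[ℝ] V →ₗ[ℝ] ℝ)
    (hΩalt : ∀ x : V, Ω x x = 0)
    (hΩnd : ∀ x : V, (∀ y : V, Ω x y = 0) → x = 0)
    (ψ : V → ℝ) (hψ : ContDiff ℝ (⊤ : ℕ∞) ψ)
    (hinv : ∀ g : V ≃ₗ[ℝ] V, (∀ a b : V, Ω (g a) (g b) = Ω a b) →
      ∃ c : ℝ, ∀ z : V, ψ (g z) - ψ z = c) :
    ∀ z w : V, ψ z = ψ w := by
  -- skew-symmetry
  have hskew : ∀ x y : V, Ω x y = -Ω y x := by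
    intro x y
    have h := hΩalt (x + y)
    simp [map_add, hΩalt x, hΩalt y] at h
    linarith
  -- transvections are symplectic and give invariance
  have key : ∀ (l : ℝ) (u z : V), ψ (z + (l * Ω u z) • u) = ψ z := by
    intro l u z
    have hcomp : ∀ (a b : ℝ), (LinearMap.id + (Ω u).smulRight (a • u)).comp
        (LinearMap.id + (Ω u).smulRight (b • u)) =
        LinearMap.id + (Ω u).smulRight ((a + b) • u) := by
      intro a b
      ext x
      simp [LinearMap.smulRight_apply, map_add, map_smul, hΩalt u, smul_smul,
        add_smul, smul_add]
      module
    set g : V ≃ₗ[ℝ] V := LinearEquiv.ofLinear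
      (LinearMap.id + (Ω u).smulRight (l • u))
      (LinearMap.id + (Ω u).smulRight ((-l) • u))
      (by rw [hcomp]; simp) (by rw [hcomp]; simp) with hg
    have hgap : ∀ x : V, g x = x + (l * Ω u x) • u := by
      intro x
      simp [hg, LinearEquiv.ofLinear_apply, LinearMap.smulRight_apply, smul_smul,
        mul_comm]
    have hsymp : ∀ a b : V, Ω (g a) (g b) = Ω a b := by
      intro a b
      rw [hgap, hgap]
      simp only [map_add, map_smul, smul_eq_mul, LinearMap.add_apply, LinearMap.smul_apply]
      rw [hΩalt u, hskew a u]
      ring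
    obtain ⟨c, hc⟩ := hinv g hsymp
    have h0 := hc 0
    rw [hgap] at h0
    simp at h0
    have hz := hc z
    rw [hgap] at hz
    rw [← h0] at hz
    linarith
  -- step: translation invariance in direction u when Ω u z ≠ 0
  have step1 : ∀ (u z : V) (t : ℝ), Ω u z ≠ 0 → ψ (z + t • u) = ψ z := by
    intro u z t h
    have := key (t / Ω u z) u z
    rwa [div_mul_cancel₀ _ h] at this
  -- full translation invariance by continuity
  have step2 : ∀ (u z : V) (t : ℝ), u ≠ 0 → ψ (z + t • u) = ψ z := by
    intro u z t hu
    by_cases h : Ω u z ≠ 0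
    · exact step1 u z t h
    push_neg at h
    obtain ⟨v, hv⟩ : ∃ v : V, Ω u v ≠ 0 := by
      by_contra hc
      push_neg at hc
      exact hu (hΩnd u hc)
    -- define h ε = ψ (z + ε•v + t•u) - ψ (z + ε•v); it is 0 for ε ≠ 0, continuous
    set F : ℝ → ℝ := fun e => ψ (z + e • v + t • u) - ψ (z + e • v) with hF
    have hFcont : Continuous F := by
      apply Continuous.sub
      · exact hψ.continuous.comp (by fun_prop)
      · exact hψ.continuous.comp (by fun_prop)
    have hF0 : ∀ e : ℝ, e ≠ 0 → F e = 0 := by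
      intro e he
      have hne : Ω u (z + e • v) ≠ 0 := by
        simp [map_add, map_smul, h, he, hv]
      have := step1 u (z + e • v) t hne
      simp [hF, this]
    have t1 : Filter.Tendsto F (nhdsWithin 0 {(0:ℝ)}ᶜ) (nhds (F 0)) :=
      (hFcont.tendsto 0).mono_left nhdsWithin_le_nhds
    have t2 : Filter.Tendsto F (nhdsWithin 0 {(0:ℝ)}ᶜ) (nhds 0) := by
      apply Filter.Tendsto.congr' _ tendsto_const_nhds
      filter_upwards [self_mem_nhdsWithin] with e he
      exact (hF0 e he).symm
    have h00 : F 0 = 0 := tendsto_nhds_unique t1 t2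
    have : ψ (z + t • u) - ψ z = 0 := by simpa [hF] using h00
    linarith
  intro z w
  by_cases hzw : w = z
  · rw [hzw]
  · have := step2 (w - z) z 1 (sub_ne_zero.mpr hzw)
    simpa using this.symm
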